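/- Let v be an n-dimensional unit vector with entries in D[ω]. Then there exists a finite product G of one- and two-level operators of the forms X_{[α,β]}, H_{[α,β]}, ω_{[α]} such that Gv = eₙ, the standard basis vector with 1 in the n-th coordinate. -/

import Mathlib

noncomputable section
open Complex

def ω : ℂ := Complex.exp (Real.pi * Complex.I / 4)

def δ : ℂ := 1 + ω

def inZω (x : ℂ) : Prop := ∃ a b c d : ℤ, x = a * ω^3 + b * ω^2 + c * ω + d

def inD (x : ℂ) : Prop := ∃ a : ℤ, ∃ n : ℕ, x = a / 2^n

def inDω (x : ℂ) : Prop :=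
  ∃ a b c d : ℂ, inD a ∧ inD b ∧ inD c ∧ inD d ∧ x = a * ω^3 + b * ω^2 + c * ω + d

def dvdZ (a b : ℂ) : Prop := ∃ t : ℂ, inZω t ∧ b = a * t

def Zc (a b c d : ℤ) : ℂ := a * ω^3 + b * ω^2 + c * ω + d

lemma omega_eq : ω = ((Real.sqrt 2 / 2 : ℝ) : ℂ) + ((Real.sqrt 2 / 2 : ℝ) : ℂ) * I := by
  have h : (Real.pi : ℂ) * I / 4 = ((Real.pi/4 : ℝ) : ℂ) * I := by push_cast; ring
  rw [ω, h, Complex.exp_mul_I, ← Complex.ofReal_cos, ← Complex.ofReal_sin,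
    Real.cos_pi_div_four, Real.sin_pi_div_four]

lemma hs2 : ((Real.sqrt 2 : ℝ) : ℂ)^2 = 2 := by
  rw [← Complex.ofReal_pow, Real.sq_sqrt (by norm_num : (0:ℝ) ≤ 2)]; norm_num

lemma hω4 : ω^4 = -1 := by
  rw [ω, ← Complex.exp_nat_mul]
  have h : ((4:ℕ):ℂ) * (Real.pi * I / 4) = Real.pi * I := by push_cast; ring
  rw [h, Complex.exp_pi_mul_I]

lemma hω8 : ω^8 = 1 := by
  have h : ω^8 = (ω^4)^2 := by ring
  rw [h, hω4]; ring

lemma hω2 : ω^2 = I := by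
  have h := hs2
  have hI := Complex.I_sq
  rw [omega_eq]
  push_cast
  linear_combination (I/2) * h + (((Real.sqrt 2 : ℝ):ℂ)^2/4) * hI

lemma sqrt2_eq : ((Real.sqrt 2 : ℝ) : ℂ) = ω - ω^3 := by
  have h2 : ω^3 = I * ω := by rw [← hω2]; ring
  have hI := Complex.I_sq
  rw [h2, omega_eq]
  push_cast
  linear_combination (((Real.sqrt 2 : ℝ):ℂ)/2) * hI

lemma conj_omega : (starRingEnd ℂ) ω = -ω^3 := by
  have h2 : ω^3 = I * ω := by rw [← hω2]; ring
  rw [h2, omega_eq]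
  have hI := Complex.I_sq
  simp only [map_add, map_mul, Complex.conj_ofReal, Complex.conj_I]
  push_cast
  linear_combination (((Real.sqrt 2 : ℝ):ℂ)/2) * hI

lemma omega_ne : ω ≠ 0 := by
  intro h
  have := hω4
  rw [h] at this
  norm_num at this

lemma sqrt2c_ne : ((Real.sqrt 2 : ℝ) : ℂ) ≠ 0 := by
  intro h
  have := hs2
  rw [h] at this
  norm_num at this

lemma delta_ne : δ ≠ 0 := by
  intro h
  have h1 : ω = -1 := by unfold δ at h; linear_combination h
  have h2 := hω2
  rw [h1] at h2
  norm_num [Complex.ext_iff] at h2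
lemma Zc_eq (a b c d : ℤ) : Zc a b c d = a * ω^3 + b * ω^2 + c * ω + d := rfl

lemma inZω_iff (x : ℂ) : inZω x ↔ ∃ a b c d : ℤ, x = Zc a b c d := Iff.rfl

lemma inZω_Zc (a b c d : ℤ) : inZω (Zc a b c d) := ⟨a,b,c,d,rfl⟩

lemma Zc_add (a b c d a' b' c' d' : ℤ) :
    Zc a b c d + Zc a' b' c' d' = Zc (a+a') (b+b') (c+c') (d+d') := by
  simp only [Zc]; push_cast; ring

lemma Zc_neg (a b c d : ℤ) : -Zc a b c d = Zc (-a) (-b) (-c) (-d) := by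
  simp only [Zc]; push_cast; ring

lemma Zc_sub (a b c d a' b' c' d' : ℤ) :
    Zc a b c d - Zc a' b' c' d' = Zc (a-a') (b-b') (c-c') (d-d') := by
  simp only [Zc]; push_cast; ring

lemma Zc_mul (a b c d a' b' c' d' : ℤ) :
    Zc a b c d * Zc a' b' c' d' =
    Zc (d*a' + c*b' + b*c' + a*d') (d*b' + c*c' + b*d' - a*a')
       (d*c' + c*d' - b*a' - a*b') (d*d' - c*a' - b*b' - a*c') := by
  simp only [Zc]
  push_cast
  linear_combination ((c*a' + b*b' + a*c' : ℂ) + (b*a' + a*b')*ω + (a*a')*ω^2) * hω4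

lemma inZω_add {x y : ℂ} (hx : inZω x) (hy : inZω y) : inZω (x + y) := by
  obtain ⟨a,b,c,d,rfl⟩ := hx; obtain ⟨a',b',c',d',rfl⟩ := hy
  exact ⟨a+a',b+b',c+c',d+d', by push_cast; ring⟩

lemma inZω_neg {x : ℂ} (hx : inZω x) : inZω (-x) := by
  obtain ⟨a,b,c,d,rfl⟩ := hx
  exact ⟨-a,-b,-c,-d, by push_cast; ring⟩

lemma inZω_sub {x y : ℂ} (hx : inZω x) (hy : inZω y) : inZω (x - y) := by
  rw [sub_eq_add_neg]; exact inZω_add hx (inZω_neg hy)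

lemma inZω_mul {x y : ℂ} (hx : inZω x) (hy : inZω y) : inZω (x * y) := by
  obtain ⟨a,b,c,d,rfl⟩ := hx; obtain ⟨a',b',c',d',rfl⟩ := hy
  have := Zc_mul a b c d a' b' c' d'
  simp only [Zc] at this
  rw [this]
  apply inZω_Zc

lemma inZω_omega : inZω ω := ⟨0,0,1,0, by push_cast; ring⟩

lemma inZω_one : inZω 1 := ⟨0,0,0,1, by push_cast; ring⟩

lemma inZω_omega_pow (m : ℕ) : inZω (ω^m) := by
  induction m with
  | zero => simpa using inZω_one
  | succ k ih => rw [pow_succ]; exact inZω_mul ih inZω_omega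

lemma key_extract (p q : ℤ) (h : (p:ℝ) + q * Real.sqrt 2 = 0) : p = 0 ∧ q = 0 := by
  by_cases hq : q = 0
  · subst hq; constructor
    · exact_mod_cast by simpa using h
    · rfl
  · exfalso
    apply irrational_sqrt_two
    refine ⟨(-p/q : ℚ), ?_⟩
    have hq' : (q:ℝ) ≠ 0 := Int.cast_ne_zero.mpr hq
    push_cast
    field_simp
    linarith [h]

lemma Z_inj (a b c d : ℤ) (h : (a:ℂ) * ω^3 + b * ω^2 + c * ω + d = 0) :
    a = 0 ∧ b = 0 ∧ c = 0 ∧ d = 0 := by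
  have hI := Complex.I_sq
  have hsq := hs2
  have h2 : (((c-a : ℤ) * (Real.sqrt 2/2) + d : ℝ) : ℂ)
      + (((a+c : ℤ) * (Real.sqrt 2/2) + b : ℝ) : ℂ) * I = 0 := by
    rw [omega_eq] at h
    push_cast at h ⊢
    linear_combination h
      + ((-(b:ℂ)/4) - b*I/2 - b*I^2/4 - a*((Real.sqrt 2:ℝ):ℂ)/8 - 3*a*((Real.sqrt 2:ℝ):ℂ)*I/8
         - 3*a*((Real.sqrt 2:ℝ):ℂ)*I^2/8 - a*((Real.sqrt 2:ℝ):ℂ)*I^3/8) * hsq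
      + (-(b:ℂ)/2 - 3*a*((Real.sqrt 2:ℝ):ℂ)/4 - a*((Real.sqrt 2:ℝ):ℂ)*I/4) * hI
  simp only [Complex.ext_iff, Complex.add_re, Complex.add_im, Complex.mul_re, Complex.mul_im,
    Complex.ofReal_re, Complex.ofReal_im, Complex.I_re, Complex.I_im, Complex.zero_re,
    Complex.zero_im] at h2
  obtain ⟨hre, him⟩ := h2
  have e1 : ((2*d : ℤ):ℝ) + ((c - a : ℤ):ℝ) * Real.sqrt 2 = 0 := by push_cast at hre ⊢; linarith
  have e2 : ((2*b : ℤ):ℝ) + ((a + c : ℤ):ℝ) * Real.sqrt 2 = 0 := by push_cast at him ⊢; linarith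
  obtain ⟨hd, hca⟩ := key_extract (2*d) (c-a) e1
  obtain ⟨hb, hac⟩ := key_extract (2*b) (a+c) e2
  refine ⟨by omega, by omega, by omega, by omega⟩
lemma Zc_inj {a b c d a' b' c' d' : ℤ} (h : Zc a b c d = Zc a' b' c' d') :
    a = a' ∧ b = b' ∧ c = c' ∧ d = d' := by
  have h0 : ((a - a' : ℤ):ℂ) * ω^3 + ((b-b':ℤ):ℂ) * ω^2 + ((c-c':ℤ):ℂ) * ω + ((d-d':ℤ):ℂ) = 0 := by
    simp only [Zc] at h
    push_cast
    linear_combination h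
  obtain ⟨h1,h2,h3,h4⟩ := Z_inj _ _ _ _ h0
  refine ⟨by omega, by omega, by omega, by omega⟩

lemma dvd_delta_of_even {a b c d : ℤ} (h : Even (a+b+c+d)) : dvdZ δ (Zc a b c d) := by
  obtain ⟨f, hf⟩ : ∃ f : ℤ, a - b + c - d = 2*f := by
    obtain ⟨e, he⟩ := h; exact ⟨a + c - e, by omega⟩
  refine ⟨Zc f (a-f) (b-a+f) (c-b+a-f), inZω_Zc _ _ _ _, ?_⟩
  have hfc : (a:ℂ) - b + c - d = 2*f := by exact_mod_cast congrArg (Int.cast : ℤ → ℂ) hf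
  simp only [Zc, δ]
  push_cast
  linear_combination (-(f:ℂ)) * hω4 - hfc

lemma not_dvd_delta_of_odd {a b c d : ℤ} (h : ¬ Even (a+b+c+d)) : ¬ dvdZ δ (Zc a b c d) := by
  rintro ⟨t, ⟨a',b',c',d', rfl⟩, heq⟩
  have h2 : Zc a b c d = Zc (a'+b') (b'+c') (c'+d') (d'-a') := by
    rw [heq]
    simp only [Zc, δ]
    push_cast
    linear_combination ((a':ℂ)) * hω4
  obtain ⟨e1,e2,e3,e4⟩ := Zc_inj h2
  exact h (by subst e1 e2 e3 e4; exact ⟨b'+c'+d', by ring⟩)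

lemma dvd_delta_iff (a b c d : ℤ) : dvdZ δ (Zc a b c d) ↔ Even (a+b+c+d) := by
  constructor
  · intro hd
    by_contra hodd
    exact not_dvd_delta_of_odd hodd hd
  · exact dvd_delta_of_even

lemma two_eq_delta3 : (2:ℂ) = δ^3 * Zc (-1) (-1) 2 (-2) := by
  simp only [Zc, δ]
  push_cast
  linear_combination ((4:ℂ) + 4*ω + ω^2) * hω4

lemma residue {a b c d : ℤ} (hodd : ¬ Even (a+b+c+d)) :
    ∃ p : ℕ, p ≤ 7 ∧ ∃ t : ℂ, inZω t ∧ Zc a b c d - ω^p = δ^3 * t := by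
  obtain ⟨h, hh⟩ : ∃ h : ℤ, a+b+c+d = 2*h+1 := by
    rcases Int.even_or_odd (a+b+c+d) with he | ⟨h2,hh2⟩
    · exact absurd he hodd
    · exact ⟨h2, hh2⟩
  rcases Int.even_or_odd (a+b) with ⟨f,hf⟩ | ⟨f,hf⟩
  · rcases Int.even_or_odd (b+c) with ⟨g,hg⟩ | ⟨g,hg⟩
    · -- case (eab,ebc)=(0,0), p = 0
      have hac : (a:ℂ) = 2*f - b + 0 := by
        exact_mod_cast congrArg (Int.cast : ℤ → ℂ) (by omega : a = 2*f - b + 0)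
      have hcc : (c:ℂ) = 2*g - b + 0 := by
        exact_mod_cast congrArg (Int.cast : ℤ → ℂ) (by omega : c = 2*g - b + 0)
      have hdc : (d:ℂ) = 2*h + 1 - 2*f - 2*g + b - 0 := by
        exact_mod_cast congrArg (Int.cast : ℤ → ℂ) (by omega : d = 2*h + 1 - 2*f - 2*g + b - 0)
      refine ⟨0, by norm_num, Zc (-h-f+2*b) (-h+3*g+2*f-3*b) (2*h-4*g-f+2*b) (-2*h+3*g), inZω_Zc _ _ _ _, ?_⟩
      simp only [Zc, δ]
      push_cast
      rw [hac, hcc, hdc]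
      linear_combination (((4:ℂ)*h - 5*g - 2*f + b) + (4*h - 3*g + f - 3*b)*ω + (h + f - 2*b)*ω^2) * hω4
    · -- case (eab,ebc)=(0,1), p = 1
      have hac : (a:ℂ) = 2*f - b + 0 := by
        exact_mod_cast congrArg (Int.cast : ℤ → ℂ) (by omega : a = 2*f - b + 0)
      have hcc : (c:ℂ) = 2*g - b + 1 := by
        exact_mod_cast congrArg (Int.cast : ℤ → ℂ) (by omega : c = 2*g - b + 1)
      have hdc : (d:ℂ) = 2*h + 1 - 2*f - 2*g + b - 1 := by
        exact_mod_cast congrArg (Int.cast : ℤ → ℂ) (by omega : d = 2*h + 1 - 2*f - 2*g + b - 1)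
      refine ⟨1, by norm_num, Zc (-h-f+2*b) (-h+3*g+2*f-3*b) (2*h-4*g-f+2*b) (-2*h+3*g), inZω_Zc _ _ _ _, ?_⟩
      simp only [Zc, δ]
      push_cast
      rw [hac, hcc, hdc]
      linear_combination (((4:ℂ)*h - 5*g - 2*f + b) + (4*h - 3*g + f - 3*b)*ω + (h + f - 2*b)*ω^2) * hω4
  · rcases Int.even_or_odd (b+c) with ⟨g,hg⟩ | ⟨g,hg⟩
    · -- case (eab,ebc)=(1,0), p = 3
      have hac : (a:ℂ) = 2*f - b + 1 := by
        exact_mod_cast congrArg (Int.cast : ℤ → ℂ) (by omega : a = 2*f - b + 1)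
      have hcc : (c:ℂ) = 2*g - b + 0 := by
        exact_mod_cast congrArg (Int.cast : ℤ → ℂ) (by omega : c = 2*g - b + 0)
      have hdc : (d:ℂ) = 2*h + 1 - 2*f - 2*g + b - 1 := by
        exact_mod_cast congrArg (Int.cast : ℤ → ℂ) (by omega : d = 2*h + 1 - 2*f - 2*g + b - 1)
      refine ⟨3, by norm_num, Zc (-h-f+2*b) (-h+3*g+2*f-3*b) (2*h-4*g-f+2*b) (-2*h+3*g), inZω_Zc _ _ _ _, ?_⟩
      simp only [Zc, δ]
      push_cast
      rw [hac, hcc, hdc]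
      linear_combination (((4:ℂ)*h - 5*g - 2*f + b) + (4*h - 3*g + f - 3*b)*ω + (h + f - 2*b)*ω^2) * hω4
    · -- case (eab,ebc)=(1,1), p = 2
      have hac : (a:ℂ) = 2*f - b + 1 := by
        exact_mod_cast congrArg (Int.cast : ℤ → ℂ) (by omega : a = 2*f - b + 1)
      have hcc : (c:ℂ) = 2*g - b + 1 := by
        exact_mod_cast congrArg (Int.cast : ℤ → ℂ) (by omega : c = 2*g - b + 1)
      have hdc : (d:ℂ) = 2*h + 1 - 2*f - 2*g + b - 2 := by
        exact_mod_cast congrArg (Int.cast : ℤ → ℂ) (by omega : d = 2*h + 1 - 2*f - 2*g + b - 2)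
      refine ⟨2, by norm_num, Zc (-2-h-f+2*b) (3-h+3*g+2*f-3*b) (-2+2*h-4*g-f+2*b) (-2*h+3*g), inZω_Zc _ _ _ _, ?_⟩
      simp only [Zc, δ]
      push_cast
      rw [hac, hcc, hdc]
      linear_combination (((-1:ℂ) + 4*h - 5*g - 2*f + b) + (3 + 4*h - 3*g + f - 3*b)*ω + (2 + h + f - 2*b)*ω^2) * hω4
def ABpair : ℕ → ℤ × ℤ
  | 0 => (1, 0)
  | (k+1) => (2*(ABpair k).1 + 2*(ABpair k).2, (ABpair k).1 + 2*(ABpair k).2)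

lemma pow_sqrt2_eq (k : ℕ) :
    (2 + (ω - ω^3))^k = ((ABpair k).1 : ℂ) + ((ABpair k).2 : ℂ) * (ω - ω^3) := by
  induction k with
  | zero => simp [ABpair]
  | succ k ih =>
    rw [pow_succ, ih]
    show _ = ((ABpair (k+1)).1 : ℂ) + ((ABpair (k+1)).2 : ℂ) * (ω - ω^3)
    simp only [ABpair]
    push_cast
    linear_combination ((-2)*((ABpair k).2:ℂ) + ((ABpair k).2:ℂ)*ω^2) * hω4

lemma even_A (k : ℕ) : Even (ABpair (k+1)).1 :=
  ⟨(ABpair k).1 + (ABpair k).2, by simp only [ABpair]; ring⟩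

lemma conj_delta_mul : (starRingEnd ℂ) δ * δ = 2 + (ω - ω^3) := by
  simp only [δ, map_add, map_one, conj_omega]
  linear_combination (-1 : ℂ) * hω4

lemma conj_Zc_mul (a b c d : ℤ) :
    (starRingEnd ℂ) (Zc a b c d) * Zc a b c d =
      ((a^2+b^2+c^2+d^2 : ℤ) : ℂ) + ((a*b+b*c+c*d-a*d : ℤ) : ℂ) * (ω - ω^3) := by
  simp only [Zc, map_add, map_mul, map_pow, map_intCast, conj_omega]
  push_cast
  linear_combination ((-(c:ℂ)*c - b*b - a*a) + (-(b:ℂ)*c + a*d - a*b)*ω + ((b:ℂ)*d)*ω^2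
    + ((b:ℂ)*c + a*b)*ω^3 + ((b:ℂ)*b + a*a)*ω^4 + (-(a:ℂ)*d + a*b)*ω^5 + (-(a:ℂ)*c)*ω^6
    + (-(a:ℂ)*b)*ω^7 + (-(a:ℂ)*a)*ω^8) * hω4

lemma extract_int (p q p' q' : ℤ)
    (h : (p:ℂ) + (q:ℂ) * (ω - ω^3) = (p':ℂ) + (q':ℂ) * (ω - ω^3)) : p = p' ∧ q = q' := by
  rw [← sqrt2_eq] at h
  have hre := congrArg Complex.re h
  simp only [Complex.add_re, Complex.mul_re, Complex.intCast_re, Complex.intCast_im,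
    Complex.ofReal_re, Complex.ofReal_im] at hre
  have e1 : ((p - p' : ℤ):ℝ) + ((q - q' : ℤ):ℝ) * Real.sqrt 2 = 0 := by
    push_cast; linarith
  obtain ⟨h1, h2⟩ := key_extract _ _ e1
  exact ⟨by omega, by omega⟩

open scoped Classical in
lemma card_even {m k : ℕ} (u : Fin m → ℂ) (hu : ∀ i, inZω (u i))
    (hsum : ∑ i, (starRingEnd ℂ) (u i) * u i = (2 + (ω - ω^3))^(k+1)) :
    Even (Finset.univ.filter (fun i => ¬ dvdZ δ (u i))).card := by
  classical
  haveI : Fact (Nat.Prime 2) := ⟨Nat.prime_two⟩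
  choose a b c d hz using hu
  set N : Fin m → ℤ := fun i => (a i)^2+(b i)^2+(c i)^2+(d i)^2 with hN
  set M : Fin m → ℤ := fun i => (a i)*(b i)+(b i)*(c i)+(c i)*(d i)-(a i)*(d i) with hM
  have key : ∀ i, (starRingEnd ℂ) (u i) * u i = (N i : ℂ) + (M i : ℂ) * (ω - ω^3) := by
    intro i
    rw [show u i = Zc (a i) (b i) (c i) (d i) from hz i, conj_Zc_mul]
  have hsum2 : ((∑ i, N i : ℤ) : ℂ) + ((∑ i, M i : ℤ):ℂ) * (ω - ω^3)
      = ((ABpair (k+1)).1 : ℂ) + ((ABpair (k+1)).2 : ℂ) * (ω - ω^3) := by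
    rw [← pow_sqrt2_eq, ← hsum,
      show ((∑ i, N i : ℤ) : ℂ) = ∑ i, ((N i : ℤ):ℂ) by push_cast; try rfl,
      show ((∑ i, M i : ℤ) : ℂ) = ∑ i, ((M i : ℤ):ℂ) by push_cast; try rfl,
      Finset.sum_mul, ← Finset.sum_add_distrib]
    exact Finset.sum_congr rfl (fun i _ => (key i).symm)
  have hNA : (∑ i, N i) = (ABpair (k+1)).1 := (extract_int _ _ _ _ hsum2).1
  have e1 : ∀ i, ((N i : ZMod 2)) = (if ¬ dvdZ δ (u i) then 1 else 0) := by
    intro i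
    have hsq : (N i : ZMod 2) = ((a i + b i + c i + d i : ℤ) : ZMod 2) := by
      rw [hN]
      push_cast
      rw [show ((a i : ZMod 2))^2 = (a i : ZMod 2) from ZMod.pow_card _,
        show ((b i : ZMod 2))^2 = (b i : ZMod 2) from ZMod.pow_card _,
        show ((c i : ZMod 2))^2 = (c i : ZMod 2) from ZMod.pow_card _,
        show ((d i : ZMod 2))^2 = (d i : ZMod 2) from ZMod.pow_card _]
    by_cases hdvd : dvdZ δ (u i)
    · have heven : Even (a i + b i + c i + d i) :=
        (dvd_delta_iff _ _ _ _).mp (by simp only [Zc]; rw [← hz i]; exact hdvd)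
      rw [hsq, if_neg (not_not.mpr hdvd), ZMod.intCast_zmod_eq_zero_iff_dvd]
      exact_mod_cast even_iff_two_dvd.mp heven
    · have hodd : ¬ Even (a i + b i + c i + d i) :=
        fun he => hdvd (by rw [hz i]; exact dvd_delta_of_even he)
      obtain ⟨e, he⟩ := Int.not_even_iff_odd.mp hodd
      rw [hsq, if_pos hdvd, he]
      push_cast
      rw [show ((2:ZMod 2)) = 0 from rfl]
      ring
  have hcard : ((Finset.univ.filter (fun i => ¬ dvdZ δ (u i))).card : ZMod 2) = 0 := by
    calc ((Finset.univ.filter (fun i => ¬ dvdZ δ (u i))).card : ZMod 2)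
        = ∑ i, (if ¬ dvdZ δ (u i) then (1 : ZMod 2) else 0) := (Finset.sum_boole _ _).symm
      _ = ∑ i, ((N i : ZMod 2)) := Finset.sum_congr rfl (fun i _ => (e1 i).symm)
      _ = ((∑ i, N i : ℤ) : ZMod 2) := by push_cast; ring
      _ = 0 := by
          rw [hNA, ZMod.intCast_zmod_eq_zero_iff_dvd]
          exact_mod_cast even_iff_two_dvd.mp (even_A k)
  rw [ZMod.natCast_eq_zero_iff] at hcard
  exact even_iff_two_dvd.mpr hcard
def Xmat (n : ℕ) (α β : Fin n) : Matrix (Fin n) (Fin n) ℂ :=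
  Matrix.of fun i j =>
    if i = α then (if j = β then 1 else 0)
    else if i = β then (if j = α then 1 else 0)
    else if i = j then 1 else 0

def Hmat (n : ℕ) (α β : Fin n) : Matrix (Fin n) (Fin n) ℂ :=
  Matrix.of fun i j =>
    if i = α ∧ j = α then (Real.sqrt 2 : ℂ)⁻¹
    else if i = α ∧ j = β then (Real.sqrt 2 : ℂ)⁻¹
    else if i = β ∧ j = α then (Real.sqrt 2 : ℂ)⁻¹
    else if i = β ∧ j = β then -(Real.sqrt 2 : ℂ)⁻¹
    else if i = j then 1 else 0

def Wmat (n : ℕ) (α : Fin n) : Matrix (Fin n) (Fin n) ℂ :=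
  Matrix.of fun i j => if i = j then (if i = α then ω else 1) else 0

def gens (n : ℕ) : Set (Matrix (Fin n) (Fin n) ℂ) :=
  {M | (∃ α β : Fin n, α < β ∧ (M = Xmat n α β ∨ M = Hmat n α β)) ∨
       (∃ α : Fin n, M = Wmat n α)}

lemma mulVec_W {n : ℕ} (α : Fin n) (x : Fin n → ℂ) :
    (Wmat n α).mulVec x = fun i => if i = α then ω * x i else x i := by
  funext i
  by_cases h : i = α <;>
    simp [Wmat, Matrix.mulVec, dotProduct, h, ite_mul, one_mul]

lemma mulVec_X {n : ℕ} (α β : Fin n) (hne : α ≠ β) (x : Fin n → ℂ) :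
    (Xmat n α β).mulVec x = fun i => if i = α then x β else if i = β then x α else x i := by
  funext i
  by_cases h1 : i = α <;> by_cases h2 : i = β
  · exact absurd (h1.symm.trans h2) hne
  · simp [Xmat, Matrix.mulVec, dotProduct, h1, h2, ite_mul, one_mul]
  · simp [Xmat, Matrix.mulVec, dotProduct, h1, h2, ite_mul, one_mul]
  · simp [Xmat, Matrix.mulVec, dotProduct, h1, h2, ite_mul, one_mul]

lemma mulVec_H {n : ℕ} (α β : Fin n) (hne : α ≠ β) (x : Fin n → ℂ) :
    (Hmat n α β).mulVec x = fun i =>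
      if i = α then (x α + x β) * ((Real.sqrt 2 : ℝ) : ℂ)⁻¹
      else if i = β then (x α - x β) * ((Real.sqrt 2 : ℝ) : ℂ)⁻¹ else x i := by
  have hne' : β ≠ α := Ne.symm hne
  funext i
  simp only [Hmat, Matrix.mulVec, dotProduct, Matrix.of_apply]
  by_cases h1 : i = α <;> by_cases h2 : i = β
  · exact absurd (h1.symm.trans h2) hne
  · rw [if_pos h1]
    have hc : ∀ j ∈ Finset.univ, (fun j =>
        (if i = α ∧ j = α then ((Real.sqrt 2:ℝ):ℂ)⁻¹
          else if i = α ∧ j = β then ((Real.sqrt 2:ℝ):ℂ)⁻¹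
          else if i = β ∧ j = α then ((Real.sqrt 2:ℝ):ℂ)⁻¹
          else if i = β ∧ j = β then -((Real.sqrt 2:ℝ):ℂ)⁻¹
          else if i = j then 1 else 0) * x j) j
        = (fun j => (if j = α then ((Real.sqrt 2:ℝ):ℂ)⁻¹ * x j else 0)
          + (if j = β then ((Real.sqrt 2:ℝ):ℂ)⁻¹ * x j else 0)) j := by
      intro j _
      by_cases hjα : j = α <;> by_cases hjβ : j = β
      · exact absurd (hjα.symm.trans hjβ) hne
      · simp [h1, hjα, hjβ, hne, hne']
      · simp [h1, hjα, hjβ, hne, hne']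
      · simp [h1, h2, hjα, hjβ, hne, hne']
        exact fun h => absurd h.symm hjα
    rw [Finset.sum_congr rfl hc, Finset.sum_add_distrib,
      Finset.sum_ite_eq' Finset.univ α (fun j => ((Real.sqrt 2:ℝ):ℂ)⁻¹ * x j),
      Finset.sum_ite_eq' Finset.univ β (fun j => ((Real.sqrt 2:ℝ):ℂ)⁻¹ * x j)]
    simp only [Finset.mem_univ, if_pos]
    ring
  · rw [if_neg h1, if_pos h2]
    have hc : ∀ j ∈ Finset.univ, (fun j =>
        (if i = α ∧ j = α then ((Real.sqrt 2:ℝ):ℂ)⁻¹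
          else if i = α ∧ j = β then ((Real.sqrt 2:ℝ):ℂ)⁻¹
          else if i = β ∧ j = α then ((Real.sqrt 2:ℝ):ℂ)⁻¹
          else if i = β ∧ j = β then -((Real.sqrt 2:ℝ):ℂ)⁻¹
          else if i = j then 1 else 0) * x j) j
        = (fun j => (if j = α then ((Real.sqrt 2:ℝ):ℂ)⁻¹ * x j else 0)
          + (if j = β then -(((Real.sqrt 2:ℝ):ℂ)⁻¹ * x j) else 0)) j := by
      intro j _
      by_cases hjα : j = α <;> by_cases hjβ : j = β
      · exact absurd (hjα.symm.trans hjβ) hne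
      · simp [h1, h2, hjα, hjβ, hne, hne']
      · simp [h1, h2, hjα, hjβ, hne, hne']
      · simp [h1, h2, hjα, hjβ, hne, hne']
        exact fun h => absurd h.symm hjβ
    rw [Finset.sum_congr rfl hc, Finset.sum_add_distrib,
      Finset.sum_ite_eq' Finset.univ α (fun j => ((Real.sqrt 2:ℝ):ℂ)⁻¹ * x j),
      Finset.sum_ite_eq' Finset.univ β (fun j => -(((Real.sqrt 2:ℝ):ℂ)⁻¹ * x j))]
    simp only [Finset.mem_univ, if_pos]
    ring
  · rw [if_neg h1, if_neg h2]
    have hc : ∀ j ∈ Finset.univ, (fun j =>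
        (if i = α ∧ j = α then ((Real.sqrt 2:ℝ):ℂ)⁻¹
          else if i = α ∧ j = β then ((Real.sqrt 2:ℝ):ℂ)⁻¹
          else if i = β ∧ j = α then ((Real.sqrt 2:ℝ):ℂ)⁻¹
          else if i = β ∧ j = β then -((Real.sqrt 2:ℝ):ℂ)⁻¹
          else if i = j then 1 else 0) * x j) j
        = (fun j => if i = j then x j else 0) j := by
      intro j _
      by_cases hj : i = j
      · simp [← hj, h1, h2]
      · simp [h1, h2, hj]
    rw [Finset.sum_congr rfl hc, Finset.sum_ite_eq Finset.univ i x]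
    simp

lemma W_replicate {n : ℕ} (m : ℕ) (α : Fin n) (x : Fin n → ℂ) :
    (List.replicate m (Wmat n α)).prod.mulVec x = fun i => if i = α then ω^m * x i else x i := by
  induction m generalizing x with
  | zero =>
    simp only [List.replicate, List.prod_nil, Matrix.one_mulVec]
    funext i
    split_ifs <;> simp
  | succ m ih =>
    rw [List.replicate_succ, List.prod_cons, ← Matrix.mulVec_mulVec, ih, mulVec_W]
    funext i
    by_cases h : i = α
    · simp [h]
      ring
    · simp [h]
lemma inZω_delta : inZω δ := ⟨0,0,1,1, by simp [δ]; ring⟩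

lemma pow_omega_mod (r : ℕ) : ω ^ r = ω ^ (r % 8) := by
  conv_lhs => rw [← Nat.div_add_mod r 8]
  rw [pow_add, pow_mul, hω8, one_pow, one_mul]

lemma delta_sq : δ^2 = (1 + ω + ω^2) * (ω - ω^3) := by
  simp only [δ]
  linear_combination ((1:ℂ) + ω) * hω4

lemma sum_extract {m : ℕ} (u : Fin m → ℂ) (a b c d : Fin m → ℤ)
    (hz : ∀ i, u i = Zc (a i) (b i) (c i) (d i)) (A B : ℤ)
    (hsum : ∑ i, (starRingEnd ℂ) (u i) * u i = (A:ℂ) + (B:ℂ)*(ω - ω^3)) :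
    ∑ i, ((a i)^2+(b i)^2+(c i)^2+(d i)^2) = A := by
  have key : ∀ i, (starRingEnd ℂ) (u i) * u i
      = (((a i)^2+(b i)^2+(c i)^2+(d i)^2 : ℤ) : ℂ)
        + (((a i)*(b i)+(b i)*(c i)+(c i)*(d i)-(a i)*(d i) : ℤ) : ℂ) * (ω - ω^3) := by
    intro i
    rw [hz i, conj_Zc_mul]
  have hsum2 : ((∑ i, ((a i)^2+(b i)^2+(c i)^2+(d i)^2) : ℤ) : ℂ)
      + ((∑ i, ((a i)*(b i)+(b i)*(c i)+(c i)*(d i)-(a i)*(d i)) : ℤ):ℂ) * (ω - ω^3)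
      = (A:ℂ) + (B:ℂ)*(ω - ω^3) := by
    rw [← hsum,
      show ((∑ i, ((a i)^2+(b i)^2+(c i)^2+(d i)^2) : ℤ) : ℂ)
        = ∑ i, ((((a i)^2+(b i)^2+(c i)^2+(d i)^2) : ℤ):ℂ) by push_cast; try rfl,
      show ((∑ i, ((a i)*(b i)+(b i)*(c i)+(c i)*(d i)-(a i)*(d i)) : ℤ) : ℂ)
        = ∑ i, ((((a i)*(b i)+(b i)*(c i)+(c i)*(d i)-(a i)*(d i)) : ℤ):ℂ) by push_cast; try rfl,
      Finset.sum_mul, ← Finset.sum_add_distrib]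
    exact Finset.sum_congr rfl (fun i _ => (key i).symm)
  exact (extract_int _ _ _ _ hsum2).1

lemma one_sq_cases (a b c d : ℤ) (h : a^2+b^2+c^2+d^2 = 1) :
    (a=0∧b=0∧c=0∧d=1) ∨ (a=0∧b=0∧c=0∧d=-1) ∨ (a=0∧b=0∧c=1∧d=0) ∨ (a=0∧b=0∧c=-1∧d=0)
    ∨ (a=0∧b=1∧c=0∧d=0) ∨ (a=0∧b=-1∧c=0∧d=0) ∨ (a=1∧b=0∧c=0∧d=0) ∨ (a=-1∧b=0∧c=0∧d=0) := by
  have ha1 : -1 ≤ a := by nlinarith [sq_nonneg b, sq_nonneg c, sq_nonneg d, sq_nonneg (a+1)]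
  have ha2 : a ≤ 1 := by nlinarith [sq_nonneg b, sq_nonneg c, sq_nonneg d, sq_nonneg (a-1)]
  have hb1 : -1 ≤ b := by nlinarith [sq_nonneg a, sq_nonneg c, sq_nonneg d, sq_nonneg (b+1)]
  have hb2 : b ≤ 1 := by nlinarith [sq_nonneg a, sq_nonneg c, sq_nonneg d, sq_nonneg (b-1)]
  have hc1 : -1 ≤ c := by nlinarith [sq_nonneg a, sq_nonneg b, sq_nonneg d, sq_nonneg (c+1)]
  have hc2 : c ≤ 1 := by nlinarith [sq_nonneg a, sq_nonneg b, sq_nonneg d, sq_nonneg (c-1)]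
  have hd1 : -1 ≤ d := by nlinarith [sq_nonneg a, sq_nonneg b, sq_nonneg c, sq_nonneg (d+1)]
  have hd2 : d ≤ 1 := by nlinarith [sq_nonneg a, sq_nonneg b, sq_nonneg c, sq_nonneg (d-1)]
  interval_cases a <;> interval_cases b <;> interval_cases c <;> interval_cases d <;> omega

lemma auxZero (n : ℕ) (v : Fin (n+1) → ℂ) (hI : ∀ i, inZω (v i))
    (hunit : (∑ i, (starRingEnd ℂ) (v i) * v i) = 1) :
    ∃ L : List (Matrix (Fin (n+1)) (Fin (n+1)) ℂ),
      (∀ M ∈ L, M ∈ gens (n+1)) ∧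
      L.prod.mulVec v = fun i => if i = Fin.last n then 1 else 0 := by
  classical
  choose a b c d hz using hI
  set N : Fin (n+1) → ℤ := fun i => (a i)^2+(b i)^2+(c i)^2+(d i)^2 with hN
  have hNsum : ∑ i, N i = 1 := by
    apply sum_extract v a b c d hz 1 0
    rw [hunit]; push_cast; ring
  have hNnonneg : ∀ l, 0 ≤ N l := fun l => by positivity
  have hex : ∃ i₀, N i₀ ≠ 0 := by
    by_contra hno
    push_neg at hno
    rw [Finset.sum_eq_zero (fun i _ => hno i)] at hNsum
    norm_num at hNsum
  obtain ⟨i₀, hi₀⟩ := hex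
  have hzero : ∀ l, l ≠ i₀ → N l = 0 := by
    intro l hl
    by_contra hnl
    have hdecomp : N i₀ + ∑ x ∈ Finset.univ.erase i₀, N x = ∑ x, N x :=
      Finset.add_sum_erase _ _ (Finset.mem_univ i₀)
    have hge : N l ≤ ∑ x ∈ Finset.univ.erase i₀, N x :=
      Finset.single_le_sum (fun x _ => hNnonneg x)
        (Finset.mem_erase.mpr ⟨hl, Finset.mem_univ l⟩)
    have h0a := hNnonneg i₀
    have h0b := hNnonneg l
    omega
  have hNi₀ : N i₀ = 1 := by
    have hdecomp : N i₀ + ∑ x ∈ Finset.univ.erase i₀, N x = ∑ x, N x :=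
      Finset.add_sum_erase _ _ (Finset.mem_univ i₀)
    have hz0 : ∑ x ∈ Finset.univ.erase i₀, N x = 0 :=
      Finset.sum_eq_zero (fun x hx => hzero x (Finset.mem_erase.mp hx).1)
    omega
  have hvl : ∀ l, l ≠ i₀ → v l = 0 := by
    intro l hl
    have h0 : (a l)^2+(b l)^2+(c l)^2+(d l)^2 = 0 := hzero l hl
    have ha0 : a l = 0 := by nlinarith [sq_nonneg (a l), sq_nonneg (b l), sq_nonneg (c l), sq_nonneg (d l)]
    have hb0 : b l = 0 := by nlinarith [sq_nonneg (a l), sq_nonneg (b l), sq_nonneg (c l), sq_nonneg (d l)]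
    have hc0 : c l = 0 := by nlinarith [sq_nonneg (a l), sq_nonneg (b l), sq_nonneg (c l), sq_nonneg (d l)]
    have hd0 : d l = 0 := by nlinarith [sq_nonneg (a l), sq_nonneg (b l), sq_nonneg (c l), sq_nonneg (d l)]
    rw [hz l, ha0, hb0, hc0, hd0]
    push_cast
    ring
  have hp : ∃ p : ℕ, p ≤ 7 ∧ v i₀ = ω^p := by
    rcases one_sq_cases (a i₀) (b i₀) (c i₀) (d i₀) hNi₀ with
      ⟨e1,e2,e3,e4⟩|⟨e1,e2,e3,e4⟩|⟨e1,e2,e3,e4⟩|⟨e1,e2,e3,e4⟩|⟨e1,e2,e3,e4⟩|⟨e1,e2,e3,e4⟩|⟨e1,e2,e3,e4⟩|⟨e1,e2,e3,e4⟩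
    · exact ⟨0, by norm_num, by rw [hz i₀, e1, e2, e3, e4]; push_cast; ring⟩
    · exact ⟨4, by norm_num, by rw [hz i₀, e1, e2, e3, e4]; push_cast; linear_combination -hω4⟩
    · exact ⟨1, by norm_num, by rw [hz i₀, e1, e2, e3, e4]; push_cast; ring⟩
    · exact ⟨5, by norm_num, by rw [hz i₀, e1, e2, e3, e4]; push_cast; linear_combination (-ω) * hω4⟩
    · exact ⟨2, by norm_num, by rw [hz i₀, e1, e2, e3, e4]; push_cast; ring⟩
    · exact ⟨6, by norm_num, by rw [hz i₀, e1, e2, e3, e4]; push_cast; linear_combination (-ω^2) * hω4⟩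
    · exact ⟨3, by norm_num, by rw [hz i₀, e1, e2, e3, e4]; push_cast; ring⟩
    · exact ⟨7, by norm_num, by rw [hz i₀, e1, e2, e3, e4]; push_cast; linear_combination (-ω^3) * hω4⟩
  obtain ⟨p, hp7, hvp⟩ := hp
  have hWact : (List.replicate (8-p) (Wmat (n+1) i₀)).prod.mulVec v
      = fun l => if l = i₀ then 1 else 0 := by
    rw [W_replicate]
    funext l
    by_cases hl : l = i₀
    · rw [if_pos hl, if_pos hl, hl, hvp, ← pow_add, show 8 - p + p = 8 by omega, hω8]
    · rw [if_neg hl, if_neg hl]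
      exact hvl l hl
  by_cases hlast : i₀ = Fin.last n
  · subst hlast
    exact ⟨List.replicate (8-p) (Wmat (n+1) (Fin.last n)),
      fun M hM => by rw [List.eq_of_mem_replicate hM]; exact Or.inr ⟨Fin.last n, rfl⟩,
      hWact⟩
  · have hlt : i₀ < Fin.last n := lt_of_le_of_ne (Fin.le_last i₀) hlast
    refine ⟨Xmat (n+1) i₀ (Fin.last n) :: List.replicate (8-p) (Wmat (n+1) i₀), ?_, ?_⟩
    · intro M hM
      rcases List.mem_cons.mp hM with rfl | hM
      · exact Or.inl ⟨i₀, Fin.last n, hlt, Or.inl rfl⟩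
      · rw [List.eq_of_mem_replicate hM]; exact Or.inr ⟨i₀, rfl⟩
    · rw [List.prod_cons, ← Matrix.mulVec_mulVec, hWact, mulVec_X _ _ (ne_of_lt hlt)]
      funext l
      by_cases h1 : l = i₀ <;> by_cases h2 : l = Fin.last n
      · exact absurd (h1.symm.trans h2) hlast
      · rw [if_pos h1, if_neg (Ne.symm hlast), if_neg h2]
      · rw [if_neg h1, if_pos h2, if_pos rfl, if_pos h2]
      · rw [if_neg h1, if_neg h2, if_neg h1, if_neg h2]

lemma inZω_pow {x : ℂ} (h : inZω x) (m : ℕ) : inZω (x^m) := by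
  induction m with
  | zero => simpa using inZω_one
  | succ r ih => rw [pow_succ]; exact inZω_mul ih h

lemma inZω_mu : inZω (1 + ω + ω^2) := ⟨0,1,1,1, by push_cast; ring⟩

lemma hCm (m : ℕ) : (starRingEnd ℂ) (ω^m) * ω^m = 1 := by
  rw [map_pow, conj_omega, ← mul_pow]
  have h : (-ω^3) * ω = 1 := by linear_combination -hω4
  rw [h, one_pow]

lemma pairStep (k n : ℕ) (v : Fin (n+1) → ℂ)
    (hI : ∀ i, inZω (δ^(k+1) * v i))
    (hunit : (∑ i, (starRingEnd ℂ) (v i) * v i) = 1)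
    (i j : Fin (n+1)) (hij : i < j)
    (hiS : ¬ dvdZ δ (δ^(k+1) * v i)) (hjS : ¬ dvdZ δ (δ^(k+1) * v j)) :
    ∃ (L2 : List (Matrix (Fin (n+1)) (Fin (n+1)) ℂ)) (v' : Fin (n+1) → ℂ),
      (∀ M ∈ L2, M ∈ gens (n+1)) ∧
      L2.prod.mulVec v = v' ∧
      (∀ l, inZω (δ^(k+1) * v' l)) ∧
      (∑ l, (starRingEnd ℂ) (v' l) * v' l) = 1 ∧
      (∀ l, ¬ dvdZ δ (δ^(k+1) * v' l) → (¬ dvdZ δ (δ^(k+1) * v l) ∧ l ≠ i ∧ l ≠ j)) := by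
  classical
  have hijne : i ≠ j := ne_of_lt hij
  obtain ⟨a1,b1,c1,d1,hz1⟩ := hI i
  obtain ⟨a2,b2,c2,d2,hz2⟩ := hI j
  have hodd1 : ¬ Even (a1+b1+c1+d1) := by
    intro he
    exact hiS (by rw [hz1]; exact dvd_delta_of_even he)
  have hodd2 : ¬ Even (a2+b2+c2+d2) := by
    intro he
    exact hjS (by rw [hz2]; exact dvd_delta_of_even he)
  obtain ⟨p, hp7, t₁, ht₁, hres1⟩ := residue hodd1
  obtain ⟨q, hq7, t₂, ht₂, hres2⟩ := residue hodd2
  have hres1' : δ^(k+1) * v i - ω^p = δ^3 * t₁ := by rw [hz1]; exact hres1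
  have hres2' : δ^(k+1) * v j - ω^q = δ^3 * t₂ := by rw [hz2]; exact hres2
  set m := (p + 12 - q) % 8 with hmdef
  have hmq : ω^(m+q) = -(ω^p) := by
    rw [pow_omega_mod (m+q), show (m+q)%8 = (p+4)%8 by omega, ← pow_omega_mod, pow_add, hω4]
    ring
  set T : ℂ := t₁ + ω^m * t₂ with hT
  set Tm : ℂ := t₁ - ω^m * t₂ + Zc (-1) (-1) 2 (-2) * ω^p with hTm
  have hTZ : inZω T := inZω_add ht₁ (inZω_mul (inZω_omega_pow m) ht₂)
  have hTmZ : inZω Tm := inZω_add (inZω_sub ht₁ (inZω_mul (inZω_omega_pow m) ht₂))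
    (inZω_mul (inZω_Zc _ _ _ _) (inZω_omega_pow p))
  have hplus : δ^(k+1) * v i + ω^m * (δ^(k+1) * v j) = δ^3 * T := by
    rw [hT]
    linear_combination hres1' + ω^m * hres2' + hmq
  have hminus : δ^(k+1) * v i - ω^m * (δ^(k+1) * v j) = δ^3 * Tm := by
    rw [hTm]
    linear_combination hres1' - ω^m * hres2' + ω^p * two_eq_delta3 - hmq
  set s2 : ℂ := ((Real.sqrt 2 : ℝ) : ℂ) with hs2def
  set v' : Fin (n+1) → ℂ := fun l =>
    if l = i then (v i + ω^m * v j) * s2⁻¹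
    else if l = j then (v i - ω^m * v j) * s2⁻¹
    else v l with hv'
  have hv'i : v' i = (v i + ω^m * v j) * s2⁻¹ := by rw [hv']; simp
  have hv'j : v' j = (v i - ω^m * v j) * s2⁻¹ := by
    rw [hv']
    simp [Ne.symm hijne]
  have hv'l : ∀ l, l ≠ i → l ≠ j → v' l = v l := by
    intro l h1 h2
    rw [hv']
    simp [h1, h2]
  -- values
  have hvi : δ^(k+1) * v' i = δ * ((1 + ω + ω^2) * T) := by
    apply mul_right_cancel₀ sqrt2c_ne
    have e1 : δ^(k+1) * v' i * ((Real.sqrt 2 : ℝ):ℂ) = δ^3 * T := by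
      rw [hv'i]
      rw [show δ^(k+1) * ((v i + ω^m * v j) * s2⁻¹) * s2
          = δ^(k+1) * (v i + ω^m * v j) * (s2⁻¹ * s2) by ring,
        inv_mul_cancel₀ sqrt2c_ne, mul_one]
      linear_combination hplus
    rw [e1, sqrt2_eq]
    linear_combination δ * T * delta_sq
  have hvj : δ^(k+1) * v' j = δ * ((1 + ω + ω^2) * Tm) := by
    apply mul_right_cancel₀ sqrt2c_ne
    have e1 : δ^(k+1) * v' j * ((Real.sqrt 2 : ℝ):ℂ) = δ^3 * Tm := by
      rw [hv'j]
      rw [show δ^(k+1) * ((v i - ω^m * v j) * s2⁻¹) * s2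
          = δ^(k+1) * (v i - ω^m * v j) * (s2⁻¹ * s2) by ring,
        inv_mul_cancel₀ sqrt2c_ne, mul_one]
      linear_combination hminus
    rw [e1, sqrt2_eq]
    linear_combination δ * Tm * delta_sq
  have hdvdi : dvdZ δ (δ^(k+1) * v' i) :=
    ⟨(1 + ω + ω^2) * T, inZω_mul inZω_mu hTZ, hvi⟩
  have hdvdj : dvdZ δ (δ^(k+1) * v' j) :=
    ⟨(1 + ω + ω^2) * Tm, inZω_mul inZω_mu hTmZ, hvj⟩
  -- the list
  refine ⟨Hmat (n+1) i j :: List.replicate m (Wmat (n+1) j), v', ?_, ?_, ?_, ?_, ?_⟩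
  · intro M hM
    rcases List.mem_cons.mp hM with rfl | hM
    · exact Or.inl ⟨i, j, hij, Or.inr rfl⟩
    · rw [List.eq_of_mem_replicate hM]; exact Or.inr ⟨j, rfl⟩
  · rw [List.prod_cons, ← Matrix.mulVec_mulVec, W_replicate, mulVec_H i j hijne]
    funext l
    by_cases h1 : l = i <;> by_cases h2 : l = j
    · exact absurd (h1.symm.trans h2) hijne
    · rw [hv']
      simp [h1, h2, hijne, hs2def]
    · rw [hv']
      simp [h1, h2, hijne, Ne.symm hijne, hs2def]
    · rw [hv']
      simp [h1, h2]
  · intro l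
    by_cases h1 : l = i
    · rw [h1, hvi]
      exact inZω_mul inZω_delta (inZω_mul inZω_mu hTZ)
    · by_cases h2 : l = j
      · rw [h2, hvj]
        exact inZω_mul inZω_delta (inZω_mul inZω_mu hTmZ)
      · rw [hv'l l h1 h2]
        exact hI l
  · -- unit
    have hjmem : j ∈ Finset.univ.erase i :=
      Finset.mem_erase.mpr ⟨Ne.symm hijne, Finset.mem_univ j⟩
    have hsplit : ∀ (f : Fin (n+1) → ℂ),
        ∑ l, f l = f i + (f j + ∑ l ∈ (Finset.univ.erase i).erase j, f l) := by
      intro f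
      rw [← Finset.add_sum_erase _ f (Finset.mem_univ i),
          ← Finset.add_sum_erase _ f hjmem]
    rw [hsplit] at hunit ⊢
    have hoff : ∑ l ∈ (Finset.univ.erase i).erase j, (starRingEnd ℂ) (v' l) * v' l
        = ∑ l ∈ (Finset.univ.erase i).erase j, (starRingEnd ℂ) (v l) * v l := by
      apply Finset.sum_congr rfl
      intro l hl
      obtain ⟨hlj, hli, _⟩ := Finset.mem_erase.mp hl |>.imp id (fun h => Finset.mem_erase.mp h)
      rw [hv'l l hli hlj]
    rw [hoff]
    have hinv2 : s2⁻¹ * s2⁻¹ = (2:ℂ)⁻¹ := by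
      rw [← mul_inv, show s2 * s2 = 2 by rw [show s2 * s2 = s2^2 by ring]; exact hs2]
    have hkey : (starRingEnd ℂ) (v' i) * v' i + (starRingEnd ℂ) (v' j) * v' j
        = (starRingEnd ℂ) (v i) * v i + (starRingEnd ℂ) (v j) * v j := by
      rw [hv'i, hv'j]
      simp only [map_mul, map_add, map_sub, map_inv₀, Complex.conj_ofReal, hs2def]
      linear_combination
        (((starRingEnd ℂ) (v i) + (starRingEnd ℂ) (ω^m) * (starRingEnd ℂ) (v j))
          * (v i + ω^m * v j)
         + ((starRingEnd ℂ) (v i) - (starRingEnd ℂ) (ω^m) * (starRingEnd ℂ) (v j))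
          * (v i - ω^m * v j)) * hinv2
        + ((starRingEnd ℂ) (v j) * v j) * hCm m
    linear_combination hunit + hkey
  · intro l hl
    by_cases h1 : l = i
    · exact absurd (h1 ▸ hdvdi) hl
    · by_cases h2 : l = j
      · exact absurd (h2 ▸ hdvdj) hl
      · exact ⟨by rwa [hv'l l h1 h2] at hl, h1, h2⟩

open scoped Classical in
lemma auxStep (k n : ℕ)
    (IH : ∀ v : Fin (n+1) → ℂ, (∀ i, inZω (δ^k * v i)) →
      (∑ i, (starRingEnd ℂ) (v i) * v i) = 1 →
      ∃ L : List (Matrix (Fin (n+1)) (Fin (n+1)) ℂ),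
        (∀ M ∈ L, M ∈ gens (n+1)) ∧
        L.prod.mulVec v = fun i => if i = Fin.last n then 1 else 0) :
    ∀ s : ℕ, ∀ v : Fin (n+1) → ℂ, (∀ i, inZω (δ^(k+1) * v i)) →
      (∑ i, (starRingEnd ℂ) (v i) * v i) = 1 →
      (Finset.univ.filter fun i => ¬ dvdZ δ (δ^(k+1) * v i)).card ≤ s →
      ∃ L : List (Matrix (Fin (n+1)) (Fin (n+1)) ℂ),
        (∀ M ∈ L, M ∈ gens (n+1)) ∧
        L.prod.mulVec v = fun i => if i = Fin.last n then 1 else 0 := by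
  intro s
  induction s with
  | zero =>
    intro v hI hunit hcard
    apply IH v ?_ hunit
    intro i
    have hmem : ¬ ¬ dvdZ δ (δ^(k+1) * v i) := by
      intro hcon
      have h1 : i ∈ Finset.univ.filter (fun i => ¬ dvdZ δ (δ^(k+1) * v i)) := by
        simp [hcon]
      have h2 := Finset.card_pos.mpr ⟨i, h1⟩
      omega
    obtain ⟨t, ht, hteq⟩ := not_not.mp hmem
    have heq : δ^k * v i = t := by
      apply mul_left_cancel₀ delta_ne
      rw [show δ * (δ^k * v i) = δ^(k+1) * v i by ring, hteq]
    rw [heq]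
    exact ht
  | succ s ihs =>
    intro v hI hunit hcard
    by_cases hle : (Finset.univ.filter fun i => ¬ dvdZ δ (δ^(k+1) * v i)).card ≤ s
    · exact ihs v hI hunit hle
    have hceq : (Finset.univ.filter fun i => ¬ dvdZ δ (δ^(k+1) * v i)).card = s + 1 := by
      omega
    have heven : Even (Finset.univ.filter fun i => ¬ dvdZ δ (δ^(k+1) * v i)).card := by
      apply card_even (k := k) (fun i => δ^(k+1) * v i) hI
      rw [show (∑ i, (starRingEnd ℂ) (δ^(k+1) * v i) * (δ^(k+1) * v i))
          = ((starRingEnd ℂ) δ * δ)^(k+1) * ∑ i, (starRingEnd ℂ) (v i) * v i by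
            rw [Finset.mul_sum]
            exact Finset.sum_congr rfl (fun i _ => by
              simp only [map_mul, map_pow]; ring),
        hunit, mul_one, conj_delta_mul]
    have h2card : 1 < (Finset.univ.filter fun i => ¬ dvdZ δ (δ^(k+1) * v i)).card := by
      obtain ⟨t, ht⟩ := heven
      omega
    obtain ⟨i, hiS, j, hjS, hij_ne⟩ := Finset.one_lt_card.mp h2card
    rw [Finset.mem_filter] at hiS hjS
    have hmain : ∀ (i j : Fin (n+1)), i < j → ¬ dvdZ δ (δ^(k+1) * v i) →
        ¬ dvdZ δ (δ^(k+1) * v j) →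
        ∃ L : List (Matrix (Fin (n+1)) (Fin (n+1)) ℂ),
          (∀ M ∈ L, M ∈ gens (n+1)) ∧
          L.prod.mulVec v = fun i => if i = Fin.last n then 1 else 0 := by
      intro i j hij hi hj
      obtain ⟨L2, v', hL2mem, hL2act, hI', hunit', hS'⟩ :=
        pairStep k n v hI hunit i j hij hi hj
      have hsub : (Finset.univ.filter fun l => ¬ dvdZ δ (δ^(k+1) * v' l))
          ⊆ ((Finset.univ.filter fun l => ¬ dvdZ δ (δ^(k+1) * v l)).erase i).erase j := by
        intro l hl
        rw [Finset.mem_filter] at hl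
        obtain ⟨hold, hli, hlj⟩ := hS' l hl.2
        rw [Finset.mem_erase, Finset.mem_erase, Finset.mem_filter]
        exact ⟨hlj, hli, Finset.mem_univ l, hold⟩
      have hcard' : (Finset.univ.filter fun l => ¬ dvdZ δ (δ^(k+1) * v' l)).card ≤ s := by
        have h1 := Finset.card_le_card hsub
        have hjmem : j ∈ (Finset.univ.filter fun l => ¬ dvdZ δ (δ^(k+1) * v l)).erase i :=
          Finset.mem_erase.mpr ⟨Ne.symm (ne_of_lt hij), Finset.mem_filter.mpr ⟨Finset.mem_univ j, hj⟩⟩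
        have himem : i ∈ (Finset.univ.filter fun l => ¬ dvdZ δ (δ^(k+1) * v l)) :=
          Finset.mem_filter.mpr ⟨Finset.mem_univ i, hi⟩
        rw [Finset.card_erase_of_mem hjmem, Finset.card_erase_of_mem himem, hceq] at h1
        omega
      obtain ⟨L1, hL1mem, hL1act⟩ := ihs v' hI' hunit' hcard'
      refine ⟨L1 ++ L2, ?_, ?_⟩
      · intro M hM
        rcases List.mem_append.mp hM with h | h
        · exact hL1mem M h
        · exact hL2mem M h
      · rw [List.prod_append, ← Matrix.mulVec_mulVec, hL2act, hL1act]
    rcases lt_or_gt_of_ne hij_ne with h | h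
    · exact hmain i j h hiS.2 hjS.2
    · exact hmain j i h hjS.2 hiS.2

lemma auxMain : ∀ (k n : ℕ) (v : Fin (n+1) → ℂ), (∀ i, inZω (δ^k * v i)) →
    (∑ i, (starRingEnd ℂ) (v i) * v i) = 1 →
    ∃ L : List (Matrix (Fin (n+1)) (Fin (n+1)) ℂ),
      (∀ M ∈ L, M ∈ gens (n+1)) ∧
      L.prod.mulVec v = fun i => if i = Fin.last n then 1 else 0 := by
  intro k
  induction k with
  | zero =>
    intro n v hI hunit
    apply auxZero n v ?_ hunit
    intro i
    have := hI i
    rwa [pow_zero, one_mul] at this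
  | succ k IHk =>
    intro n v hI hunit
    classical
    exact auxStep k n (IHk n) _ v hI hunit (le_refl _)

lemma inZω_delta_pow_mono {x : ℂ} {k : ℕ} (h : inZω (δ^k * x)) (m : ℕ) (hkm : k ≤ m) :
    inZω (δ^m * x) := by
  obtain ⟨r, rfl⟩ := Nat.exists_eq_add_of_le hkm
  clear hkm
  induction r with
  | zero => simpa using h
  | succ r ih =>
    rw [show δ^(k+(r+1)) * x = δ * (δ^(k+r) * x) by ring]
    exact inZω_mul inZω_delta ih

lemma hδ4 : δ^4 = 2 * Zc 2 3 2 0 := by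
  simp only [δ, Zc]
  push_cast
  linear_combination hω4

lemma inDω_pow (x : ℂ) (h : inDω x) : ∃ k, inZω (δ^k * x) := by
  obtain ⟨A,B,C,D, hA, hB, hC, hD, rfl⟩ := h
  obtain ⟨a, na, rfl⟩ := hA
  obtain ⟨b, nb, rfl⟩ := hB
  obtain ⟨c, nc, rfl⟩ := hC
  obtain ⟨d, nd, rfl⟩ := hD
  set N := na ⊔ nb ⊔ nc ⊔ nd with hN
  have hpow : ∀ (z : ℤ) (nz : ℕ), nz ≤ N → (2:ℂ)^N * ((z:ℂ) / 2^nz) = ((z * 2^(N - nz) : ℤ) : ℂ) := by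
    intro z nz hnz
    have h2 : (2:ℂ)^N = 2^nz * 2^(N-nz) := by
      rw [← pow_add]
      congr 1
      omega
    push_cast
    rw [h2]
    field_simp
  refine ⟨4*N, ?_⟩
  have key : δ^(4*N) * ((a:ℂ)/2^na * ω^3 + (b:ℂ)/2^nb * ω^2 + (c:ℂ)/2^nc * ω + (d:ℂ)/2^nd)
      = (Zc 2 3 2 0)^N * (((a * 2^(N-na) : ℤ):ℂ) * ω^3 + ((b * 2^(N-nb) : ℤ):ℂ) * ω^2
        + ((c * 2^(N-nc) : ℤ):ℂ) * ω + ((d * 2^(N-nd) : ℤ):ℂ)) := by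
    rw [← hpow a na (by omega), ← hpow b nb (by omega), ← hpow c nc (by omega),
      ← hpow d nd (by omega)]
    rw [show δ^(4*N) = (δ^4)^N by rw [← pow_mul], hδ4, mul_pow]
    ring
  rw [key]
  exact inZω_mul (inZω_pow (inZω_Zc 2 3 2 0) N) (inZω_Zc _ _ _ _)

theorem column_lemma (n : ℕ) (v : Fin (n+1) → ℂ)
    (hD : ∀ i, inDω (v i))
    (hunit : (∑ i, (starRingEnd ℂ) (v i) * v i) = 1) :
    ∃ L : List (Matrix (Fin (n+1)) (Fin (n+1)) ℂ),
      (∀ M ∈ L, M ∈ gens (n+1)) ∧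
      L.prod.mulVec v = fun i => if i = Fin.last n then 1 else 0 := by
  classical
  choose kf hkf using fun i => inDω_pow (v i) (hD i)
  have hI : ∀ i, inZω (δ^(Finset.univ.sup kf) * v i) := fun i =>
    inZω_delta_pow_mono (hkf i) _ (Finset.le_sup (Finset.mem_univ i))
  exact auxMain (Finset.univ.sup kf) n v hI hunit
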